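/- A linear thrackle on n points has at most n edges: if P is a set of n points in general position in the plane and E is a set of segments with endpoints in P such that every two segments in E meet exactly once (either at a common endpoint or at a proper crossing), then |E| ≤ n. -/

import Mathlib

open Finset

abbrev Pt : Type := ℝ × ℝ

/-- 2D cross product (determinant) of two vectors. -/
def cross2 (u v : Pt) : ℝ := u.1 * v.2 - u.2 * v.1

/-- The points of `P` are in general position: no three of them are collinear. -/
def GenPos (P : Finset Pt) : Prop :=
  ∀ a ∈ P, ∀ b ∈ P, ∀ c ∈ P, a ≠ b → a ≠ c → b ≠ c → ¬ Collinear ℝ ({a, b, c} : Set Pt)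

/-- The points of `P` are in convex position. -/
def ConvexPos (P : Finset Pt) : Prop :=
  ∀ x ∈ P, x ∉ convexHull ℝ (↑(P.erase x) : Set Pt)

/-- The convex hull of a finite point set. -/
def hull (S : Finset Pt) : Set Pt := convexHull ℝ (↑S : Set Pt)

/-- `C(𝒮)` is a convex hull thrackle on `P`: the sets are subsets of `P`, hulls are
pairwise distinct, no hull is contained in another, any two hulls intersect, and the
intersection of any three distinct hulls is contained in `P`. -/
def CHT (P : Finset Pt) (𝒮 : Finset (Finset Pt)) : Prop :=
  GenPos P ∧
  (∀ S ∈ 𝒮, S ⊆ P) ∧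
  (∀ S ∈ 𝒮, ∀ T ∈ 𝒮, hull S = hull T → S = T) ∧
  (∀ S ∈ 𝒮, ∀ T ∈ 𝒮, S ≠ T → ¬ hull S ⊆ hull T) ∧
  (∀ S ∈ 𝒮, ∀ T ∈ 𝒮, S ≠ T → (hull S ∩ hull T).Nonempty) ∧
  (∀ S ∈ 𝒮, ∀ T ∈ 𝒮, ∀ U ∈ 𝒮, S ≠ T → S ≠ U → T ≠ U →
    hull S ∩ hull T ∩ hull U ⊆ (↑P : Set Pt))

/-- A linear thrackle on `n` points has at most `n` edges: if every two of the segments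
(with endpoints in a point set `P` in general position) meet in exactly one point --
either a common endpoint or a proper crossing -- then there are at most `|P|` segments. -/
lemma collinear_of_cross2 {a b c : Pt} (hab : a ≠ b)
    (h : cross2 (b - a) (c - a) = 0) : Collinear ℝ ({a, b, c} : Set Pt) := by
  rw [collinear_iff_of_mem (Set.mem_insert a _)]
  refine ⟨b - a, ?_⟩
  simp only [cross2, Prod.fst_sub, Prod.snd_sub] at h
  have hne : b.1 - a.1 ≠ 0 ∨ b.2 - a.2 ≠ 0 := by
    by_contra hcon
    push_neg at hcon
    exact hab (by ext <;> linarith [hcon.1, hcon.2])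
  intro p hp
  rcases hp with rfl | hp
  · exact ⟨0, by simp⟩
  rcases hp with rfl | hp
  · exact ⟨1, by simp⟩
  rcases hp with rfl
  rcases hne with h1 | h2
  · refine ⟨(p.1 - a.1) / (b.1 - a.1), ?_⟩
    ext
    · show p.1 = (p.1 - a.1) / (b.1 - a.1) * (b - a).1 + a.1
      rw [Prod.fst_sub]; field_simp; ring
    · show p.2 = (p.1 - a.1) / (b.1 - a.1) * (b - a).2 + a.2
      rw [Prod.snd_sub]; field_simp; nlinarith [h]
  · refine ⟨(p.2 - a.2) / (b.2 - a.2), ?_⟩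
    ext
    · show p.1 = (p.2 - a.2) / (b.2 - a.2) * (b - a).1 + a.1
      rw [Prod.fst_sub]; field_simp; nlinarith [h]
    · show p.2 = (p.2 - a.2) / (b.2 - a.2) * (b - a).2 + a.2
      rw [Prod.snd_sub]; field_simp; ring

lemma cross2_ne {P : Finset Pt} (hgen : GenPos P) {a b c : Pt}
    (ha : a ∈ P) (hb : b ∈ P) (hc : c ∈ P) (hab : a ≠ b) (hac : a ≠ c) (hbc : b ≠ c) :
    cross2 (b - a) (c - a) ≠ 0 :=
  fun h => hgen a ha b hb c hc hab hac hbc (collinear_of_cross2 hab h)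

lemma mem_hull_pair {a b : Pt} {z : Pt} (h : z ∈ hull ({a, b} : Finset Pt)) :
    ∃ s t : ℝ, 0 ≤ s ∧ 0 ≤ t ∧ s + t = 1 ∧ s • a + t • b = z := by
  rw [hull] at h
  simp only [Finset.coe_insert, Finset.coe_singleton, convexHull_pair] at h
  exact h

lemma cross2_affine (n q x y : Pt) (s t : ℝ) (h : s + t = 1) :
    cross2 n ((s • x + t • y) - q) = s * cross2 n (x - q) + t * cross2 n (y - q) := by
  have hs : s = 1 - t := by linarith
  subst hs
  simp only [cross2, Prod.fst_sub, Prod.snd_sub, Prod.fst_add, Prod.snd_add,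
    Prod.smul_fst, Prod.smul_snd, smul_eq_mul]
  ring

theorem linear_thrackle_card_le (P : Finset Pt) (E : Finset (Finset Pt))
    (hgen : GenPos P)
    (hE : ∀ e ∈ E, e ⊆ P ∧ e.card = 2)
    (hmeet : ∀ e ∈ E, ∀ f ∈ E, e ≠ f → ∃ z, hull e ∩ hull f = {z}) :
    E.card ≤ P.card := by
  classical
  by_cases hstar : ∃ v, ∀ e ∈ E, v ∈ e
  · -- star case
    obtain ⟨v, hv⟩ := hstar
    have hpick : ∀ e, ∃ u : Pt, e ∈ E → (u ∈ e ∧ e = {v, u}) := by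
      intro e
      by_cases he : e ∈ E
      · obtain ⟨x, y, hxy, hxyE⟩ := Finset.card_eq_two.1 (hE e he).2
        have hve := hv e he
        rw [hxyE] at hve
        rcases Finset.mem_insert.1 hve with rfl | h
        · exact ⟨y, fun _ => ⟨by rw [hxyE]; simp, hxyE⟩⟩
        · have hvy : v = y := by simpa using h
          subst hvy
          exact ⟨x, fun _ => ⟨by rw [hxyE]; simp, by rw [hxyE, Finset.pair_comm]⟩⟩
      · exact ⟨v, fun h => absurd h he⟩
    choose g hg using hpick
    apply Finset.card_le_card_of_injOn g
    · intro e he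
      exact (hE e he).1 ((hg e he).1)
    · intro e he e' he' hEq
      rw [Finset.mem_coe] at he he'
      rw [(hg e he).2, (hg e' he').2, hEq]
  · push_neg at hstar
    -- hstar : ∀ v, ∃ e ∈ E, v ∉ e
    have hmax : ∀ v : Pt, ∃ m : Pt, (v ∈ P ∧ ∃ w, w ≠ v ∧ ({v, w} : Finset Pt) ∈ E) →
        (({v, m} : Finset Pt) ∈ E ∧ m ≠ v ∧
          ∀ w, ({v, w} : Finset Pt) ∈ E → w ≠ v → w ≠ m → 0 < cross2 (w - v) (m - v)) := by
      intro v
      by_cases H : v ∈ P ∧ ∃ w, w ≠ v ∧ ({v, w} : Finset Pt) ∈ E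
      swap
      · exact ⟨v, fun h => absurd h H⟩
      obtain ⟨hvP, w₀, hw0v, hw0E⟩ := H
      obtain ⟨e', he'E, hve'⟩ := hstar v
      obtain ⟨c, d, hcd, he'cd⟩ := Finset.card_eq_two.1 (hE e' he'E).2
      subst he'cd
      have hvc : v ≠ c := fun h => hve' (by rw [h]; simp)
      have hvd : v ≠ d := fun h => hve' (by rw [h]; simp)
      have hcP : c ∈ P := (hE _ he'E).1 (by simp)
      have hdP : d ∈ P := (hE _ he'E).1 (by simp)
      set n : Pt := if cross2 (d - c) (v - c) < 0 then d - c else c - d with hn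
      have hnv : cross2 n (v - c) < 0 := by
        have hne : cross2 (d - c) (v - c) ≠ 0 :=
          cross2_ne hgen hcP hdP hvP hcd (Ne.symm hvc) (Ne.symm hvd)
        rw [hn]; split_ifs with h
        · exact h
        · have hflip : cross2 (c - d) (v - c) = -cross2 (d - c) (v - c) := by
            simp [cross2]; ring
          rcases hne.lt_or_gt with h' | h'
          · exact absurd h' h
          · rw [hflip]; linarith
      have hnd : cross2 n (d - c) = 0 := by
        rw [hn]; split_ifs <;> · simp [cross2]; ring
      have hside : ∀ w, w ∈ P → w ≠ v → ({v, w} : Finset Pt) ∈ E → 0 ≤ cross2 n (w - c) := by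
        intro w hwP hwv hwE
        by_cases hwc : w = c
        · subst hwc; simp [cross2]
        by_cases hwd : w = d
        · subst hwd; exact le_of_eq hnd.symm
        have hne_edge : ({v, w} : Finset Pt) ≠ {c, d} := by
          intro hEq
          have : v ∈ ({c, d} : Finset Pt) := hEq ▸ Finset.mem_insert_self v {w}
          rcases Finset.mem_insert.1 this with h | h
          · exact hvc h
          · exact hvd (Finset.mem_singleton.1 h)
        obtain ⟨z, hz⟩ := hmeet _ hwE _ he'E hne_edge
        have hzb : z ∈ hull ({v, w} : Finset Pt) ∩ hull ({c, d} : Finset Pt) := hz ▸ rfl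
        obtain ⟨s, t, hs, ht, hst, hzvw⟩ := mem_hull_pair hzb.1
        obtain ⟨p, q, hp, hq, hpq, hzcd⟩ := mem_hull_pair hzb.2
        have hfz0 : cross2 n (z - c) = 0 := by
          rw [← hzcd, cross2_affine n c c d p q hpq]
          have h0 : cross2 n (c - c) = 0 := by simp [cross2]
          rw [h0, hnd]; ring
        have hfz : cross2 n (z - c) = s * cross2 n (v - c) + t * cross2 n (w - c) := by
          rw [← hzvw, cross2_affine n c v w s t hst]
        have hwcross : cross2 n (w - c) ≠ 0 := by
          have hbase : cross2 (d - c) (w - c) ≠ 0 :=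
            cross2_ne hgen hcP hdP hwP hcd (fun h => hwc h.symm) (fun h => hwd h.symm)
          rw [hn]; split_ifs
          · exact hbase
          · have : cross2 (c - d) (w - c) = -cross2 (d - c) (w - c) := by simp [cross2]; ring
            rw [this]; exact neg_ne_zero.2 hbase
        have hsum : s * cross2 n (v - c) + t * cross2 n (w - c) = 0 := by
          rw [← hfz, hfz0]
        rcases hwcross.lt_or_gt with h' | h'
        · exfalso
          have hsA : s * cross2 n (v - c) ≤ 0 :=
            mul_nonpos_of_nonneg_of_nonpos hs hnv.le
          have htB : t * cross2 n (w - c) ≤ 0 :=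
            mul_nonpos_of_nonneg_of_nonpos ht h'.le
          have hsA0 : s * cross2 n (v - c) = 0 := by linarith
          have htB0 : t * cross2 n (w - c) = 0 := by linarith
          have hs0 : s = 0 := by
            rcases mul_eq_zero.1 hsA0 with h | h
            · exact h
            · exact absurd h hnv.ne
          have ht1 : t = 1 := by linarith
          rw [ht1, one_mul] at htB0
          exact h'.ne htB0
        · linarith
      have hL : ∀ w, w ∈ P → w ≠ v → ({v, w} : Finset Pt) ∈ E → 0 < cross2 n (w - v) := by
        intro w hwP hwv hwE
        have h1 := hside w hwP hwv hwE
        have h2 : cross2 n (w - v) = cross2 n (w - c) - cross2 n (v - c) := by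
          simp [cross2]; ring
        rw [h2]; linarith [hnv]
      set N := P.filter (fun w => w ≠ v ∧ ({v, w} : Finset Pt) ∈ E) with hN
      have hw0P : w₀ ∈ P := (hE _ hw0E).1 (by simp)
      have hNne : N.Nonempty := ⟨w₀, Finset.mem_filter.2 ⟨hw0P, hw0v, hw0E⟩⟩
      obtain ⟨m, hmN, hmin⟩ := N.exists_min_image
        (fun w => (n.1 * (w - v).1 + n.2 * (w - v).2) / cross2 n (w - v)) hNne
      obtain ⟨hmP, hmv, hmE⟩ := Finset.mem_filter.1 hmN
      refine ⟨m, fun _ => ⟨hmE, hmv, ?_⟩⟩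
      intro w hwE hwv hwm
      have hwP : w ∈ P := (hE _ hwE).1 (by simp)
      have hwN : w ∈ N := Finset.mem_filter.2 ⟨hwP, hwv, hwE⟩
      have hmin' := hmin w hwN
      have hLw := hL w hwP hwv hwE
      have hLm := hL m hmP hmv hmE
      rw [div_le_div_iff₀ hLm hLw] at hmin'
      have hcr : cross2 (w - v) (m - v) ≠ 0 :=
        cross2_ne hgen hvP hwP hmP (Ne.symm hwv) (Ne.symm hmv) hwm
      have hid : cross2 (w - v) (m - v) * (n.1 * n.1 + n.2 * n.2) =
          (n.1 * (w - v).1 + n.2 * (w - v).2) * cross2 n (m - v) -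
          (n.1 * (m - v).1 + n.2 * (m - v).2) * cross2 n (w - v) := by
        simp [cross2]; ring
      have hnn : 0 < n.1 * n.1 + n.2 * n.2 := by
        have hne0 : n ≠ 0 := by
          rw [hn]; split_ifs
          · exact sub_ne_zero.2 (Ne.symm hcd)
          · exact sub_ne_zero.2 hcd
        have : n.1 ≠ 0 ∨ n.2 ≠ 0 := by
          by_contra hcon; push_neg at hcon
          exact hne0 (Prod.ext hcon.1 hcon.2)
        rcases this with h | h
        · nlinarith [mul_self_pos.2 h, mul_self_nonneg n.2]
        · nlinarith [mul_self_pos.2 h, mul_self_nonneg n.1]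
      rcases hcr.lt_or_gt with h | h
      · exfalso; nlinarith [hid, hmin', hnn]
      · exact h
    choose M hM using hmax
    have claim : ∀ e ∈ E, ∃ u, u ∈ e ∧ e = {u, M u} := by
      intro e he
      obtain ⟨u, v, huv, rfl⟩ := Finset.card_eq_two.1 (hE e he).2
      have huP : u ∈ P := (hE _ he).1 (by simp)
      have hvP : v ∈ P := (hE _ he).1 (by simp)
      have heswap : ({v, u} : Finset Pt) ∈ E := by rw [Finset.pair_comm]; exact he
      have hMu := hM u ⟨huP, v, Ne.symm huv, he⟩
      have hMv := hM v ⟨hvP, u, huv, heswap⟩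
      by_cases h1 : M u = v
      · exact ⟨u, by simp, by rw [h1]⟩
      by_cases h2 : M v = u
      · exact ⟨v, by simp, by rw [h2, Finset.pair_comm]⟩
      exfalso
      obtain ⟨haE, hau, hmaxu⟩ := hMu
      obtain ⟨hbE, hbv, hmaxv⟩ := hMv
      set a := M u with ha
      set b := M v with hb
      have h3 : 0 < cross2 (v - u) (a - u) :=
        hmaxu v he (Ne.symm huv) (fun h => h1 h.symm)
      have h4 : 0 < cross2 (u - v) (b - v) :=
        hmaxv u heswap huv (fun h => h2 h.symm)
      have hav : a ≠ v := fun h => h1 h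
      have hbu : b ≠ u := fun h => h2 h
      have hfg : ({u, a} : Finset Pt) ≠ {v, b} := by
        intro hEq
        have : u ∈ ({v, b} : Finset Pt) := hEq ▸ Finset.mem_insert_self u {a}
        rcases Finset.mem_insert.1 this with h | h
        · exact huv h
        · exact hbu (Finset.mem_singleton.1 h).symm
      obtain ⟨z, hz⟩ := hmeet _ haE _ hbE hfg
      have hzb : z ∈ hull ({u, a} : Finset Pt) ∩ hull ({v, b} : Finset Pt) := hz ▸ rfl
      obtain ⟨s, t, hs, ht, hst, h5⟩ := mem_hull_pair hzb.1
      obtain ⟨p, q, hp, hq, hpq, h6⟩ := mem_hull_pair hzb.2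
      have e1 : cross2 (v - u) (z - u) = t * cross2 (v - u) (a - u) := by
        rw [← h5, cross2_affine (v - u) u u a s t hst]
        have h0 : cross2 (v - u) (u - u) = 0 := by simp [cross2]
        rw [h0]; ring
      have e2 : cross2 (v - u) (z - u) = q * cross2 (v - u) (b - u) := by
        rw [← h6, cross2_affine (v - u) u v b p q hpq]
        have h0 : cross2 (v - u) (v - u) = 0 := by simp [cross2]; ring
        rw [h0]; ring
      have e4 : cross2 (v - u) (b - u) = -cross2 (u - v) (b - v) := by
        simp [cross2]; ring
      have ht0 : t = 0 := by nlinarith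
      have hq0 : q = 0 := by nlinarith
      have hs1 : s = 1 := by linarith
      have hp1 : p = 1 := by linarith
      have hzu : z = u := by rw [← h5, ht0, hs1]; simp
      have hzv : z = v := by rw [← h6, hq0, hp1]; simp
      exact huv (hzu ▸ hzv)
    have hpick : ∀ e, ∃ u : Pt, e ∈ E → (u ∈ e ∧ e = {u, M u}) := by
      intro e
      by_cases he : e ∈ E
      · obtain ⟨u, hu1, hu2⟩ := claim e he
        exact ⟨u, fun _ => ⟨hu1, hu2⟩⟩
      · exact ⟨(0, 0), fun h => absurd h he⟩
    choose g hg using hpick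
    apply Finset.card_le_card_of_injOn g
    · intro e he
      exact (hE e he).1 ((hg e he).1)
    · intro e he e' he' hEq
      rw [Finset.mem_coe] at he he'
      rw [(hg e he).2, (hg e' he').2, hEq]
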